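/- Let h: ℤ → ℂ[λ] be a family of one-variable polynomials and c ∈ ℂ* such that ((1/2)λ − μ)·h_{i+j}(λ+μ) = −c^i·μ·h_j(μ) holds in ℂ[λ,μ] for all i,j ∈ ℤ. Then h_i = 0 for all i ∈ ℤ. -/
import Mathlib


/-- If h_i ∈ ℂ[λ] and c ∈ ℂ* satisfy
((1/2)λ − μ)·h_{i+j}(λ+μ) = −c^i·μ·h_j(μ) in ℂ[λ,μ] for all i,j ∈ ℤ
(equivalently for all complex values of λ,μ), then h_i = 0 for all i. -/
theorem stmt_15 (h : ℤ → Polynomial ℂ) (c : ℂ) (hc : c ≠ 0)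
    (hyp : ∀ i j : ℤ, ∀ l m : ℂ,
      ((1/2) * l - m) * (h (i + j)).eval (l + m) = - c ^ i * m * (h j).eval m) :
    ∀ i : ℤ, h i = 0 := by
  intro i
  have key : ∀ l : ℂ, (Polynomial.X * h i).eval l = 0 := by
    intro l
    have := hyp 0 i l 0
    simp at this
    have h2 : (1/2 : ℂ) * l * (h i).eval l = 0 := by
      simpa using this
    simp only [Polynomial.eval_mul, Polynomial.eval_X]
    rcases mul_eq_zero.mp h2 with h3 | h3
    · rcases mul_eq_zero.mp h3 with h4 | h4
      · norm_num at h4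
      · simp [h4]
    · simp [h3]
  have hz : Polynomial.X * h i = 0 := Polynomial.zero_of_eval_zero _ key
  rcases mul_eq_zero.mp hz with h3 | h3
  · exact absurd h3 Polynomial.X_ne_zero
  · exact h3
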